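/- arXiv:1805.05386 — 2 statements merged into one kernel-verified Lean document; each statement's English description precedes it below -/
import Mathlib

section
/- For every polynomial u ∈ 𝕋_s[z] there exists U ∈ 𝕋_s[z] such that U^{(−1)} − U = u, where twisting acts coefficient-wise via the inverse Frobenius on 𝕋_s and fixes z. -/
open Filter

noncomputable section

/-- Membership in the Tate algebra `𝕋_s` over `K`: the coefficients tend to `0`
(for every `ε > 0` only finitely many coefficients have norm `≥ ε`). -/
def IsTate (K : Type) [NontriviallyNormedField K] (s : ℕ)
    (f : MvPowerSeries (Fin s) K) : Prop :=
  ∀ ε : ℝ, 0 < ε → {ν : Fin s →₀ ℕ | ε ≤ ‖MvPowerSeries.coeff ν f‖}.Finite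

/-- The Gauss norm `‖f‖_∞ = sup_ν |a_ν|` on the Tate algebra. -/
def gaussNorm (K : Type) [NontriviallyNormedField K] (s : ℕ)
    (f : MvPowerSeries (Fin s) K) : ℝ :=
  ⨆ ν : Fin s →₀ ℕ, ‖MvPowerSeries.coeff ν f‖

/-- The coefficient-wise twist of a power series induced by a ring endomorphism of `K`. -/
def twPS (K : Type) [NontriviallyNormedField K] (s : ℕ) (τK : K →+* K) :
    MvPowerSeries (Fin s) K →+* MvPowerSeries (Fin s) K :=
  MvPowerSeries.map (σ := Fin s) τK

open Polynomial in
/-- Auxiliary: in an algebraically closed normed field the equation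
`x ^ q - x + a ^ q = 0` has a solution with `‖x‖ ≤ ‖a‖` (Newton polygon
argument: the minimal-norm root of the monic polynomial works). -/
lemma exists_root_aux (K : Type) [NontriviallyNormedField K] [IsAlgClosed K]
    (q : ℕ) (hq2 : 2 ≤ q) (a : K) :
    ∃ x : K, x ^ q - x + a ^ q = 0 ∧ ‖x‖ ≤ ‖a‖ := by
  classical
  set p : K[X] := X ^ q + (-X + C (a ^ q)) with hp
  have h1q : (1 : WithBot ℕ) < (q : ℕ) := by exact_mod_cast lt_of_lt_of_le one_lt_two hq2
  have hdlt : (-X + C (a ^ q) : K[X]).degree < (q : ℕ) := by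
    apply lt_of_le_of_lt (degree_add_le _ _)
    simp only [degree_neg, degree_X]
    exact max_lt h1q (lt_of_le_of_lt degree_C_le (lt_trans (by norm_num) h1q))
  have hmo : p.Monic := monic_X_pow_add hdlt
  have hdeg : p.degree = (q : ℕ) := by
    rw [hp, degree_add_eq_left_of_degree_lt (by rwa [degree_X_pow]), degree_X_pow]
  have hnd : p.natDegree = q := natDegree_eq_of_degree_eq_some hdeg
  have hsp : p.Splits := IsAlgClosed.splits p
  have hcard : p.roots.card = q := by
    rw [← hnd]; exact Polynomial.splits_iff_card_roots.mp hsp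
  have hne : p.roots.toFinset.Nonempty := by
    rw [Finset.nonempty_iff_ne_empty]
    intro h
    have h0 : p.roots = 0 := by simpa [Multiset.toFinset_eq_empty] using h
    rw [h0] at hcard; simp at hcard; omega
  obtain ⟨x, hx, hmin⟩ := Finset.exists_min_image p.roots.toFinset (fun r => ‖r‖₊) hne
  have hxroot : p.IsRoot x := isRoot_of_mem_roots (Multiset.mem_toFinset.mp hx)
  have heq : x ^ q - x + a ^ q = 0 := by
    have h := hxroot
    simp only [IsRoot, hp, eval_add, eval_pow, eval_X, eval_neg, eval_C] at h
    linear_combination h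
  refine ⟨x, heq, ?_⟩
  have hprod : p.coeff 0 = (-1) ^ q * p.roots.prod := by
    rw [← hnd]; exact hsp.coeff_zero_eq_prod_roots_of_monic hmo
  have hc0 : p.coeff 0 = a ^ q := by
    simp only [hp, coeff_add, coeff_X_pow, coeff_neg, coeff_X_zero, coeff_C_zero]
    rw [if_neg (by omega)]; ring
  have hnorm : ‖x‖₊ ^ q ≤ ‖a‖₊ ^ q := by
    have h1 : ‖x‖₊ ^ q ≤ (p.roots.map (fun r => ‖r‖₊)).prod := by
      rw [← hcard]
      have h3 := Multiset.pow_card_le_prod (s := p.roots.map fun r => ‖r‖₊) (a := ‖x‖₊) ?_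
      · simpa using h3
      · intro y hy
        obtain ⟨r, hr, rfl⟩ := Multiset.mem_map.mp hy
        exact hmin r (Multiset.mem_toFinset.mpr hr)
    have h2 : (p.roots.map (fun r => ‖r‖₊)).prod = ‖p.roots.prod‖₊ := by
      simpa using (Multiset.prod_hom p.roots (nnnormHom (α := K)).toMonoidHom)
    calc ‖x‖₊ ^ q ≤ ‖p.roots.prod‖₊ := h1.trans_eq h2
      _ = ‖(-1 : K) ^ q * p.roots.prod‖₊ := by simp
      _ = ‖p.coeff 0‖₊ := by rw [hprod]
      _ = ‖a‖₊ ^ q := by rw [hc0]; simp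
  have hfin := (pow_le_pow_iff_left₀ zero_le zero_le (by omega : q ≠ 0)).mp hnorm
  exact_mod_cast hfin

/-- for every `u ∈ 𝕋_s[z]` there exists `U ∈ 𝕋_s[z]` with
`U^{(-1)} - U = u`, where the twist acts coefficient-wise (via the inverse Frobenius
`τ⁻¹` on `𝕋_s`) and fixes `z`. -/
theorem stmt8
    (K : Type) [NontriviallyNormedField K] [IsUltrametricDist K] [CompleteSpace K]
    [IsAlgClosed K]
    (q : ℕ) (hq : IsPrimePow q)
    (τK : K ≃+* K) (hτK : ∀ x : K, τK x = x ^ q)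
    (s : ℕ)
    (u : Polynomial (MvPowerSeries (Fin s) K)) (hu : ∀ i : ℕ, IsTate K s (u.coeff i)) :
    ∃ U : Polynomial (MvPowerSeries (Fin s) K), (∀ i : ℕ, IsTate K s (U.coeff i)) ∧
      U.map (twPS K s (τK.symm : K ≃+* K).toRingHom) - U = u := by
  have hq2 : 2 ≤ q := hq.two_le
  -- root choice function
  set R : K → K := fun a => (exists_root_aux K q hq2 a).choose with hR
  have hReq : ∀ a : K, (R a) ^ q - (R a) + a ^ q = 0 :=
    fun a => (exists_root_aux K q hq2 a).choose_spec.1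
  have hRle : ∀ a : K, ‖R a‖ ≤ ‖a‖ :=
    fun a => (exists_root_aux K q hq2 a).choose_spec.2
  have hRtw : ∀ a : K, τK.symm (R a) - R a = a := by
    intro a
    apply τK.injective
    rw [map_sub, RingEquiv.apply_symm_apply, hτK, hτK]
    linear_combination - hReq a
  -- the twisted series
  set V : ℕ → MvPowerSeries (Fin s) K :=
    fun i ν => R (MvPowerSeries.coeff ν (u.coeff i)) with hV
  set U : Polynomial (MvPowerSeries (Fin s) K) :=
    ∑ i ∈ Finset.range (u.natDegree + 1), Polynomial.monomial i (V i) with hU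
  have hUcoeff : ∀ j, U.coeff j = if j ≤ u.natDegree then V j else 0 := by
    intro j
    rw [hU, Polynomial.finset_sum_coeff]
    simp only [Polynomial.coeff_monomial]
    by_cases hj : j ≤ u.natDegree
    · rw [if_pos hj, Finset.sum_eq_single j]
      · simp
      · intro b _ hbj; rw [if_neg hbj]
      · intro hjm; exact absurd (Finset.mem_range.mpr (by omega)) hjm
    · rw [if_neg hj, Finset.sum_eq_zero]
      intro b hb
      rw [if_neg]
      rintro rfl
      exact hj (Nat.lt_succ_iff.mp (Finset.mem_range.mp hb))
  refine ⟨U, ?_, ?_⟩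
  · intro i ε hε
    rw [hUcoeff i]
    by_cases hi : i ≤ u.natDegree
    · rw [if_pos hi]
      apply Set.Finite.subset (hu i ε hε)
      intro ν hν
      simp only [Set.mem_setOf_eq] at hν ⊢
      calc ε ≤ ‖MvPowerSeries.coeff ν (V i)‖ := hν
        _ ≤ ‖MvPowerSeries.coeff ν (u.coeff i)‖ := by
            rw [hV]; exact hRle _
    · rw [if_neg hi]
      simp only [map_zero, norm_zero]
      convert Set.finite_empty
      ext ν; simp; linarith
  · ext j ν
    simp only [Polynomial.coeff_sub, Polynomial.coeff_map, MvPowerSeries.coeff_map,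
      map_sub, hUcoeff j]
    by_cases hj : j ≤ u.natDegree
    · rw [if_pos hj]
      show τK.symm (MvPowerSeries.coeff ν (V j)) - MvPowerSeries.coeff ν (V j)
        = MvPowerSeries.coeff ν (u.coeff j)
      exact hRtw _
    · rw [if_neg hj]
      rw [Polynomial.coeff_eq_zero_of_natDegree_lt (by omega : u.natDegree < j)]
      simp
end
end

section
/- Let φ be a Drinfeld A[t_1,…,t_s]-module of rank r with A_r ∈ 𝕋_s^×. Then the de Rham module H*_DR(φ) = Der(φ)/Der_si(φ) is a free 𝕋_s-module of rank r, with basis the classes of δ^0, δ^1, …, δ^{r−1}, where δ^0 = η^{{1}} (so δ^0_θ = φ_θ − θ) and δ^i is the biderivation with δ^i_θ = τ^i for 1 ≤ i ≤ r−1. -/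
open Filter

noncomputable section

/-- The subring `𝔽_q[t_1,…,t_s]` of `𝕋_s`: generated by the variables and the
`𝔽_q`-constants (elements of `K` fixed by the `q`-power map). -/
def FqTSub (K : Type) [NontriviallyNormedField K] (s q : ℕ) :
    Subring (MvPowerSeries (Fin s) K) :=
  Subring.closure
    (Set.range (MvPowerSeries.X : Fin s → MvPowerSeries (Fin s) K) ∪
      {f | ∃ x : K, x ^ q = x ∧ f = MvPowerSeries.C (σ := Fin s) (R := K) x})

/-- The subring `A[t_1,…,t_s] = 𝔽_q[θ][t_1,…,t_s]` of `𝕋_s`. -/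
def AtsSub (K : Type) [NontriviallyNormedField K] (s q : ℕ) (θ : K) :
    Subring (MvPowerSeries (Fin s) K) :=
  Subring.closure
    ({MvPowerSeries.C (σ := Fin s) (R := K) θ} ∪
      Set.range (MvPowerSeries.X : Fin s → MvPowerSeries (Fin s) K) ∪
      {f | ∃ x : K, x ^ q = x ∧ f = MvPowerSeries.C (σ := Fin s) (R := K) x})

/-- Multiplication in the twisted polynomial ring `𝕋_s[τ]` (with `τ f = f^{(1)} τ`),
where a twisted polynomial `Σ_i c_i τ^i` is encoded as the finitely supported
function `i ↦ c_i`. -/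
def tmulPS (K : Type) [NontriviallyNormedField K] (s : ℕ)
    (tw : MvPowerSeries (Fin s) K →+* MvPowerSeries (Fin s) K)
    (f g : ℕ →₀ MvPowerSeries (Fin s) K) : ℕ →₀ MvPowerSeries (Fin s) K :=
  f.sum fun i c => g.sum fun j d => Finsupp.single (i + j) (c * (⇑tw)^[i] d)

/-- Left multiplication of a twisted polynomial by the scalar `c ∈ 𝕋_s`. -/
def cSMul (K : Type) [NontriviallyNormedField K] (s : ℕ)
    (c : MvPowerSeries (Fin s) K) (h : ℕ →₀ MvPowerSeries (Fin s) K) :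
    ℕ →₀ MvPowerSeries (Fin s) K :=
  Finsupp.mapRange (fun x => c * x) (mul_zero c) h

/-- `φ : A[t_1,…,t_s] → 𝕋_s[τ]` is the Drinfeld-module structure map: an
`𝔽_q[t_1,…,t_s]`-algebra homomorphism into the twisted polynomial ring sending
`θ` to `Dθ = θ + A_1 τ + ⋯ + A_r τ^r`. -/
def IsDrinfeldHom (K : Type) [NontriviallyNormedField K] (s q : ℕ) (θ : K)
    (tw : MvPowerSeries (Fin s) K →+* MvPowerSeries (Fin s) K)
    (Dθ : ℕ →₀ MvPowerSeries (Fin s) K)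
    (φ : AtsSub K s q θ → (ℕ →₀ MvPowerSeries (Fin s) K)) : Prop :=
  (∀ a b, φ (a + b) = φ a + φ b) ∧
  (∀ a b, φ (a * b) = tmulPS K s tw (φ a) (φ b)) ∧
  (∀ a : AtsSub K s q θ,
    (a : MvPowerSeries (Fin s) K) = MvPowerSeries.C (σ := Fin s) (R := K) θ → φ a = Dθ) ∧
  (∀ a : AtsSub K s q θ, (a : MvPowerSeries (Fin s) K) ∈ FqTSub K s q →
    φ a = Finsupp.single 0 (a : MvPowerSeries (Fin s) K)) ∧
  (∀ a n, IsTate K s (φ a n))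

/-- `η` is a biderivation for `φ`: an `𝔽_q[t_1,…,t_s]`-linear map
`A[t_1,…,t_s] → τ𝕋_s[τ]` with `η_{ab} = a η_b + η_a φ_b`. -/
def IsBider (K : Type) [NontriviallyNormedField K] (s q : ℕ) (θ : K)
    (tw : MvPowerSeries (Fin s) K →+* MvPowerSeries (Fin s) K)
    (φ : AtsSub K s q θ → (ℕ →₀ MvPowerSeries (Fin s) K))
    (η : AtsSub K s q θ → (ℕ →₀ MvPowerSeries (Fin s) K)) : Prop :=
  (∀ a b, η (a + b) = η a + η b) ∧
  (∀ v a : AtsSub K s q θ, (v : MvPowerSeries (Fin s) K) ∈ FqTSub K s q →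
    η (v * a) = cSMul K s (v : MvPowerSeries (Fin s) K) (η a)) ∧
  (∀ a, η a 0 = 0) ∧
  (∀ a n, IsTate K s (η a n)) ∧
  (∀ a b, η (a * b)
    = cSMul K s (a : MvPowerSeries (Fin s) K) (η b) + tmulPS K s tw (η a) (φ b))

section TateLemmas
variable {K : Type} [NontriviallyNormedField K] {s : ℕ}

lemma isTate_zero : IsTate K s 0 := by
  intro ε hε
  convert Set.finite_empty
  ext ν
  simp [Set.mem_setOf_eq, hε.not_ge]

lemma isTate_add {f g : MvPowerSeries (Fin s) K} (hf : IsTate K s f) (hg : IsTate K s g) :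
    IsTate K s (f + g) := by
  intro ε hε
  refine ((hf (ε/2) (by positivity)).union (hg (ε/2) (by positivity))).subset ?_
  intro ν hν
  simp only [Set.mem_setOf_eq] at hν
  by_contra hc
  simp only [Set.mem_union, Set.mem_setOf_eq, not_or, not_le] at hc
  rw [map_add] at hν
  have := norm_add_le (MvPowerSeries.coeff ν f) (MvPowerSeries.coeff ν g)
  linarith [hc.1, hc.2]

lemma isTate_neg {f : MvPowerSeries (Fin s) K} (hf : IsTate K s f) : IsTate K s (-f) := by
  intro ε hε
  refine (hf ε hε).subset ?_
  intro ν hν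
  simp only [Set.mem_setOf_eq, map_neg, norm_neg] at hν ⊢
  exact hν

lemma isTate_sub {f g : MvPowerSeries (Fin s) K} (hf : IsTate K s f) (hg : IsTate K s g) :
    IsTate K s (f - g) := by
  rw [sub_eq_add_neg]; exact isTate_add hf (isTate_neg hg)

lemma isTate_C (x : K) : IsTate K s (MvPowerSeries.C (σ := Fin s) (R := K) x) := by
  intro ε hε
  refine (Set.finite_singleton (0 : Fin s →₀ ℕ)).subset ?_
  intro ν hν
  simp only [Set.mem_setOf_eq] at hν
  by_contra h
  simp only [Set.mem_singleton_iff] at h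
  rw [MvPowerSeries.coeff_C, if_neg h] at hν
  simp only [norm_zero] at hν
  linarith

lemma IsTate.bound {f : MvPowerSeries (Fin s) K} (hf : IsTate K s f) :
    ∃ B : ℝ, 1 ≤ B ∧ ∀ ν, ‖MvPowerSeries.coeff ν f‖ ≤ B := by
  have h1 := hf 1 one_pos
  have hnn : (0:ℝ) ≤ ∑ ν ∈ h1.toFinset, ‖MvPowerSeries.coeff ν f‖ :=
    Finset.sum_nonneg fun i _ => norm_nonneg _
  refine ⟨1 + ∑ ν ∈ h1.toFinset, ‖MvPowerSeries.coeff ν f‖, by linarith, ?_⟩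
  intro ν
  by_cases hν : 1 ≤ ‖MvPowerSeries.coeff ν f‖
  · have hm : ν ∈ h1.toFinset := by simpa using hν
    have := Finset.single_le_sum (f := fun ν => ‖MvPowerSeries.coeff ν f‖)
      (fun i _ => norm_nonneg _) hm
    linarith
  · push_neg at hν
    linarith

lemma isTate_mul [IsUltrametricDist K] {f g : MvPowerSeries (Fin s) K}
    (hf : IsTate K s f) (hg : IsTate K s g) : IsTate K s (f * g) := by
  classical
  obtain ⟨Bf, hBf1, hBf⟩ := hf.bound
  obtain ⟨Bg, hBg1, hBg⟩ := hg.bound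
  intro ε hε
  have hεg : (0:ℝ) < ε / Bg := by positivity
  have hεf : (0:ℝ) < ε / Bf := by positivity
  have hfin := ((hf _ hεg).prod (hg _ hεf)).image fun p => p.1 + p.2
  refine hfin.subset ?_
  intro ν hν
  simp only [Set.mem_setOf_eq] at hν
  rw [MvPowerSeries.coeff_mul] at hν
  have hne : (Finset.HasAntidiagonal.antidiagonal ν).Nonempty := ⟨(0, ν), by simp⟩
  obtain ⟨p, hp, hsup⟩ := Finset.exists_mem_eq_sup' hne
    (fun p => ‖MvPowerSeries.coeff p.1 f * MvPowerSeries.coeff p.2 g‖)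
  have hle : ε ≤ ‖MvPowerSeries.coeff p.1 f * MvPowerSeries.coeff p.2 g‖ := by
    calc ε ≤ _ := hν
    _ ≤ _ := hne.norm_sum_le_sup'_norm _
    _ = _ := hsup
  rw [norm_mul] at hle
  have hp1 : ε / Bg ≤ ‖MvPowerSeries.coeff p.1 f‖ := by
    rw [div_le_iff₀ (by positivity)]
    calc ε ≤ _ := hle
    _ ≤ ‖MvPowerSeries.coeff p.1 f‖ * Bg := by
        exact mul_le_mul_of_nonneg_left (hBg _) (norm_nonneg _)
  have hp2 : ε / Bf ≤ ‖MvPowerSeries.coeff p.2 g‖ := by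
    rw [div_le_iff₀ (by positivity)]
    calc ε ≤ _ := hle
    _ ≤ ‖MvPowerSeries.coeff p.2 g‖ * Bf := by
        rw [mul_comm] at hle ⊢
        exact mul_le_mul_of_nonneg_left (hBf _) (norm_nonneg _)
  exact ⟨p, ⟨hp1, hp2⟩, (Finset.HasAntidiagonal.mem_antidiagonal.mp hp)⟩

end TateLemmas


section More
variable {K : Type} [NontriviallyNormedField K] {s : ℕ}

lemma isTate_tw {q : ℕ} (hq : q ≠ 0) (τK : K →+* K) (hτ : ∀ x, ‖τK x‖ = ‖x‖ ^ q)
    {f : MvPowerSeries (Fin s) K} (hf : IsTate K s f) : IsTate K s (twPS K s τK f) := by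
  intro ε hε
  refine (hf (min ε 1) (by positivity)).subset ?_
  intro ν hν
  simp only [Set.mem_setOf_eq] at hν ⊢
  rw [twPS, MvPowerSeries.coeff_map, hτ] at hν
  by_contra hc
  push_neg at hc
  have h1 : ‖MvPowerSeries.coeff ν f‖ < 1 := hc.trans_le (min_le_right _ _)
  have h2 : ‖MvPowerSeries.coeff ν f‖ < ε := hc.trans_le (min_le_left _ _)
  have := pow_le_of_le_one (norm_nonneg _) h1.le hq
  linarith

lemma isTate_tw_iter {q : ℕ} (hq : q ≠ 0) (τK : K →+* K) (hτ : ∀ x, ‖τK x‖ = ‖x‖ ^ q)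
    (k : ℕ) {f : MvPowerSeries (Fin s) K} (hf : IsTate K s f) :
    IsTate K s ((⇑(twPS K s τK))^[k] f) := by
  induction k generalizing f with
  | zero => exact hf
  | succ m ih =>
    rw [Function.iterate_succ_apply]
    exact ih (isTate_tw hq τK hτ hf)

lemma iter_map_zero (tw : MvPowerSeries (Fin s) K →+* MvPowerSeries (Fin s) K) (k : ℕ) :
    (⇑tw)^[k] (0 : MvPowerSeries (Fin s) K) = 0 := by
  induction k with
  | zero => rfl
  | succ m ih => rw [Function.iterate_succ_apply, map_zero, ih]

lemma iter_map_one (tw : MvPowerSeries (Fin s) K →+* MvPowerSeries (Fin s) K) (k : ℕ) :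
    (⇑tw)^[k] (1 : MvPowerSeries (Fin s) K) = 1 := by
  induction k with
  | zero => rfl
  | succ m ih => rw [Function.iterate_succ_apply, map_one, ih]

lemma iter_map_mul (tw : MvPowerSeries (Fin s) K →+* MvPowerSeries (Fin s) K) (k : ℕ)
    (a b : MvPowerSeries (Fin s) K) : (⇑tw)^[k] (a * b) = (⇑tw)^[k] a * (⇑tw)^[k] b := by
  induction k generalizing a b with
  | zero => rfl
  | succ m ih => rw [Function.iterate_succ_apply, map_mul, ih, Function.iterate_succ_apply,
      Function.iterate_succ_apply]

lemma cSMul_apply (c : MvPowerSeries (Fin s) K) (h : ℕ →₀ MvPowerSeries (Fin s) K) (n : ℕ) :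
    cSMul K s c h n = c * h n := by
  rw [cSMul, Finsupp.mapRange_apply]

lemma tmul_apply (tw : MvPowerSeries (Fin s) K →+* MvPowerSeries (Fin s) K)
    (f g : ℕ →₀ MvPowerSeries (Fin s) K) (n : ℕ) :
    tmulPS K s tw f g n = ∑ i ∈ Finset.range (n+1), f i * (⇑tw)^[i] (g (n - i)) := by
  rw [tmulPS, Finsupp.sum_apply]
  have inner : ∀ i c, (Finsupp.sum g fun j d => Finsupp.single (i + j) (c * (⇑tw)^[i] d)) n
      = if i ≤ n then c * (⇑tw)^[i] (g (n - i)) else 0 := by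
    intro i c
    rw [Finsupp.sum_apply, Finsupp.sum]
    simp only [Finsupp.single_apply]
    by_cases hin : i ≤ n
    · rw [if_pos hin]
      have hiff : ∀ j, (i + j = n) = (j = n - i) := by
        intro j; rw [eq_iff_iff]; omega
      simp only [hiff]
      rw [Finset.sum_ite_eq' g.support (n - i) (fun j => c * (⇑tw)^[i] (g j))]
      by_cases hmem : n - i ∈ g.support
      · rw [if_pos hmem]
      · rw [if_neg hmem, Finsupp.notMem_support_iff.mp hmem, iter_map_zero, mul_zero]
    · rw [if_neg hin]
      apply Finset.sum_eq_zero
      intro j _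
      rw [if_neg (by omega)]
  have hstep : (Finsupp.sum f fun i c =>
        (Finsupp.sum g fun j d => Finsupp.single (i + j) (c * (⇑tw)^[i] d)) n)
      = Finsupp.sum f fun i c => if i ≤ n then c * (⇑tw)^[i] (g (n - i)) else 0 :=
    Finsupp.sum_congr fun i _ => inner i (f i)
  rw [hstep]
  rw [Finsupp.sum]
  rw [← Finset.sum_filter]
  have hss : f.support.filter (fun i => i ≤ n) ⊆ Finset.range (n+1) := by
    intro i hi
    simp only [Finset.mem_filter] at hi
    simp only [Finset.mem_range]
    omega
  apply Finset.sum_subset hss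
  intro i hi hni
  have hf0 : f i = 0 := by
    by_contra hne
    exact hni (Finset.mem_filter.mpr ⟨Finsupp.mem_support_iff.mpr hne, by
      simp only [Finset.mem_range] at hi; omega⟩)
  rw [hf0, zero_mul]

lemma tmul_single_apply (tw : MvPowerSeries (Fin s) K →+* MvPowerSeries (Fin s) K)
    (a : ℕ) (cc : MvPowerSeries (Fin s) K) (g : ℕ →₀ MvPowerSeries (Fin s) K) (n : ℕ) :
    tmulPS K s tw (Finsupp.single a cc) g n
      = if a ≤ n then cc * (⇑tw)^[a] (g (n - a)) else 0 := by
  rw [tmul_apply]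
  simp only [Finsupp.single_apply, ite_mul, zero_mul]
  rw [Finset.sum_ite_eq]
  simp [Nat.lt_succ_iff]

lemma tmul_add_left (tw : MvPowerSeries (Fin s) K →+* MvPowerSeries (Fin s) K)
    (f f' g : ℕ →₀ MvPowerSeries (Fin s) K) :
    tmulPS K s tw (f + f') g = tmulPS K s tw f g + tmulPS K s tw f' g := by
  refine Finsupp.ext fun n => ?_
  simp only [Finsupp.add_apply, tmul_apply, ← Finset.sum_add_distrib]
  apply Finset.sum_congr rfl
  intro i _
  rw [add_mul]

lemma tmul_sub_left (tw : MvPowerSeries (Fin s) K →+* MvPowerSeries (Fin s) K)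
    (f f' g : ℕ →₀ MvPowerSeries (Fin s) K) :
    tmulPS K s tw (f - f') g = tmulPS K s tw f g - tmulPS K s tw f' g := by
  refine Finsupp.ext fun n => ?_
  simp only [Finsupp.sub_apply, tmul_apply, ← Finset.sum_sub_distrib]
  apply Finset.sum_congr rfl
  intro i _
  rw [sub_mul]

lemma cSMul_add (c : MvPowerSeries (Fin s) K) (h h' : ℕ →₀ MvPowerSeries (Fin s) K) :
    cSMul K s c (h + h') = cSMul K s c h + cSMul K s c h' := by
  refine Finsupp.ext fun n => ?_
  simp only [Finsupp.add_apply, cSMul_apply, mul_add]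

lemma cSMul_sub (c : MvPowerSeries (Fin s) K) (h h' : ℕ →₀ MvPowerSeries (Fin s) K) :
    cSMul K s c (h - h') = cSMul K s c h - cSMul K s c h' := by
  refine Finsupp.ext fun n => ?_
  simp only [Finsupp.sub_apply, cSMul_apply, mul_sub]

lemma cSMul_sub_left (c c' : MvPowerSeries (Fin s) K) (h : ℕ →₀ MvPowerSeries (Fin s) K) :
    cSMul K s (c - c') h = cSMul K s c h - cSMul K s c' h := by
  refine Finsupp.ext fun n => ?_
  simp only [Finsupp.sub_apply, cSMul_apply, sub_mul]

lemma tmul_zero_left (tw : MvPowerSeries (Fin s) K →+* MvPowerSeries (Fin s) K)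
    (g : ℕ →₀ MvPowerSeries (Fin s) K) : tmulPS K s tw 0 g = 0 := by
  refine Finsupp.ext fun n => ?_
  rw [tmul_apply]
  simp

lemma cSMul_zero (c : MvPowerSeries (Fin s) K) : cSMul K s c 0 = 0 := by
  refine Finsupp.ext fun n => ?_
  simp [cSMul_apply]

end More


section S3
variable {K : Type} [NontriviallyNormedField K] {s : ℕ}

lemma sum_cdval_apply {r : ℕ} (hr : 0 < r) (Dθ : ℕ →₀ MvPowerSeries (Fin s) K)
    (θ : K) (dval : Fin r → (ℕ →₀ MvPowerSeries (Fin s) K))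
    (hdval : ∀ i : Fin r, dval i =
      if (i : ℕ) = 0 then Dθ - Finsupp.single 0 (MvPowerSeries.C (σ := Fin s) (R := K) θ)
      else Finsupp.single (i : ℕ) 1)
    (c : Fin r → MvPowerSeries (Fin s) K) (n : ℕ) :
    (∑ i : Fin r, cSMul K s (c i) (dval i)) n
      = c ⟨0, hr⟩ * ((Dθ - Finsupp.single 0 (MvPowerSeries.C (σ := Fin s) (R := K) θ) : ℕ →₀ MvPowerSeries (Fin s) K) n)
        + (if hn : n < r then (if n = 0 then 0 else c ⟨n, hn⟩) else 0) := by
  rw [Finsupp.finset_sum_apply]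
  have key : ∀ i : Fin r, cSMul K s (c i) (dval i) n
      = (if i = (⟨0, hr⟩ : Fin r) then
          c i * ((Dθ - Finsupp.single 0 (MvPowerSeries.C (σ := Fin s) (R := K) θ) : ℕ →₀ MvPowerSeries (Fin s) K) n) else 0)
        + (if (i : ℕ) = n ∧ (i : ℕ) ≠ 0 then c i else 0) := by
    intro i
    rw [cSMul_apply, hdval i]
    by_cases h0 : (i : ℕ) = 0
    · have hi0 : i = (⟨0, hr⟩ : Fin r) := Fin.ext h0
      rw [if_pos h0, if_pos hi0, if_neg (by simp [h0]), add_zero]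
    · rw [if_neg h0, if_neg (by rw [Fin.ext_iff]; simpa using h0), zero_add,
        Finsupp.single_apply]
      by_cases hin : (i : ℕ) = n
      · rw [if_pos hin, mul_one, if_pos ⟨hin, h0⟩]
      · rw [if_neg hin, mul_zero, if_neg (fun h => hin h.1)]
  simp only [key]
  rw [Finset.sum_add_distrib]
  congr 1
  · rw [Finset.sum_ite_eq' Finset.univ (⟨0, hr⟩ : Fin r)
      (fun i => c i * ((Dθ - Finsupp.single 0 (MvPowerSeries.C (σ := Fin s) (R := K) θ) : ℕ →₀ MvPowerSeries (Fin s) K) n)),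
      if_pos (Finset.mem_univ _)]
  · by_cases hn : n < r
    · rw [dif_pos hn]
      by_cases hn0 : n = 0
      · rw [if_pos hn0]
        apply Finset.sum_eq_zero
        intro i _
        rw [if_neg (by omega)]
      · rw [if_neg hn0]
        have hiff : ∀ i : Fin r, ((i : ℕ) = n ∧ (i : ℕ) ≠ 0) = (i = ⟨n, hn⟩) := by
          intro i
          rw [eq_iff_iff, Fin.ext_iff]
          constructor
          · exact fun h => h.1
          · intro h; exact ⟨h, by rw [h]; exact hn0⟩
        simp only [hiff]
        rw [Finset.sum_ite_eq' Finset.univ (⟨n, hn⟩ : Fin r) (fun i => c i),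
          if_pos (Finset.mem_univ _)]
    · rw [dif_neg hn]
      apply Finset.sum_eq_zero
      intro i _
      rw [if_neg (by omega)]

end S3


section Big
variable {K : Type} [NontriviallyNormedField K] {s : ℕ}

lemma reduceLemma [IsUltrametricDist K]
    {q r : ℕ} (hq : q ≠ 0) (hr : 0 < r)
    (τK : K →+* K) (hτ : ∀ x : K, ‖τK x‖ = ‖x‖ ^ q)
    (θ : K)
    (Dθ : ℕ →₀ MvPowerSeries (Fin s) K)
    (hDθ0 : Dθ 0 = MvPowerSeries.C (σ := Fin s) (R := K) θ)
    (hDθtop : ∀ n : ℕ, r < n → Dθ n = 0)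
    (hDθT : ∀ n, IsTate K s (Dθ n))
    (uinv : MvPowerSeries (Fin s) K) (huinvT : IsTate K s uinv)
    (huinv : Dθ r * uinv = 1)
    (dval : Fin r → (ℕ →₀ MvPowerSeries (Fin s) K))
    (hdval : ∀ i : Fin r, dval i =
      if (i : ℕ) = 0 then Dθ - Finsupp.single 0 (MvPowerSeries.C (σ := Fin s) (R := K) θ)
      else Finsupp.single (i : ℕ) 1) :
    ∀ (N : ℕ) (h : ℕ →₀ MvPowerSeries (Fin s) K), h 0 = 0 → (∀ n, IsTate K s (h n)) →
      (∀ n, N + r < n → h n = 0) →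
      ∃ c : Fin r → MvPowerSeries (Fin s) K, (∀ i, IsTate K s (c i)) ∧
        ∃ mm : ℕ →₀ MvPowerSeries (Fin s) K, mm 0 = 0 ∧ (∀ n, IsTate K s (mm n)) ∧
        h = (∑ i : Fin r, cSMul K s (c i) (dval i))
          + (tmulPS K s (twPS K s τK) mm Dθ
              - cSMul K s (MvPowerSeries.C (σ := Fin s) (R := K) θ) mm) := by
  intro N
  induction N with
  | zero =>
    intro h h0 hT hbd
    set c0 : MvPowerSeries (Fin s) K := h r * uinv with hc0
    have hc0T : IsTate K s c0 := isTate_mul (hT r) huinvT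
    refine ⟨fun i => if (i : ℕ) = 0 then c0 else h i - c0 * Dθ i, ?_, 0, ?_,
      fun n => isTate_zero, ?_⟩
    · intro i
      dsimp only
      split_ifs
      · exact hc0T
      · exact isTate_sub (hT _) (isTate_mul hc0T (hDθT _))
    · simp
    · rw [tmul_zero_left, cSMul_zero, sub_zero, add_zero]
      refine Finsupp.ext fun n => ?_
      rw [sum_cdval_apply hr Dθ θ dval hdval]
      dsimp only
      rw [if_pos (show ((⟨0, hr⟩ : Fin r) : ℕ) = 0 from rfl)]
      rw [Finsupp.sub_apply, Finsupp.single_apply]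
      by_cases hn0 : n = 0
      · subst hn0
        rw [if_pos rfl, hDθ0, sub_self, mul_zero, dif_pos hr, if_pos rfl]
        simp [h0]
      · rw [if_neg (fun hh => hn0 hh.symm), sub_zero]
        by_cases hnr : n < r
        · rw [dif_pos hnr, if_neg hn0]
          rw [if_neg (show ¬ ((⟨n, hnr⟩ : Fin r) : ℕ) = 0 from hn0)]
          show h n = c0 * Dθ n + (h n - c0 * Dθ n)
          ring
        · rw [dif_neg hnr, add_zero]
          by_cases hnr' : n = r
          · subst hnr'
            calc h n = h n * (Dθ n * uinv) := by rw [huinv, mul_one]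
            _ = c0 * Dθ n := by rw [hc0]; ring
          · rw [hDθtop n (by omega), mul_zero, hbd n (by omega)]
  | succ N IH =>
    intro h h0 hT hbd
    set cc : MvPowerSeries (Fin s) K := h (N+1+r) * (⇑(twPS K s τK))^[N+1] uinv with hcc
    have hccT : IsTate K s cc := isTate_mul (hT _) (isTate_tw_iter hq τK hτ _ huinvT)
    have hm1T : ∀ n, IsTate K s ((Finsupp.single (N+1) cc : ℕ →₀ MvPowerSeries (Fin s) K) n) := by
      intro n
      rw [Finsupp.single_apply]
      split_ifs
      · exact hccT
      · exact isTate_zero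
    have hm1app : ∀ n, tmulPS K s (twPS K s τK) (Finsupp.single (N+1) cc) Dθ n
        = if N+1 ≤ n then cc * (⇑(twPS K s τK))^[N+1] (Dθ (n - (N+1))) else 0 :=
      fun n => tmul_single_apply _ _ _ _ _
    have hh'0 : (h - (tmulPS K s (twPS K s τK) (Finsupp.single (N+1) cc) Dθ
        - cSMul K s (MvPowerSeries.C (σ := Fin s) (R := K) θ) (Finsupp.single (N+1) cc))) 0 = 0 := by
      rw [Finsupp.sub_apply, Finsupp.sub_apply, hm1app, cSMul_apply, h0,
        Finsupp.single_apply, if_neg (show ¬ N+1 ≤ 0 by omega),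
        if_neg (show ¬ N+1 = 0 by omega)]
      simp
    have hh'T : ∀ n, IsTate K s ((h - (tmulPS K s (twPS K s τK) (Finsupp.single (N+1) cc) Dθ
        - cSMul K s (MvPowerSeries.C (σ := Fin s) (R := K) θ) (Finsupp.single (N+1) cc))) n) := by
      intro n
      rw [Finsupp.sub_apply, Finsupp.sub_apply, hm1app n, cSMul_apply]
      refine isTate_sub (hT n) (isTate_sub ?_ (isTate_mul (isTate_C θ) (hm1T n)))
      split_ifs
      · exact isTate_mul hccT (isTate_tw_iter hq τK hτ _ (hDθT _))
      · exact isTate_zero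
    have hh'bd : ∀ n, N + r < n →
        (h - (tmulPS K s (twPS K s τK) (Finsupp.single (N+1) cc) Dθ
          - cSMul K s (MvPowerSeries.C (σ := Fin s) (R := K) θ) (Finsupp.single (N+1) cc))) n = 0 := by
      intro n hn
      rw [Finsupp.sub_apply, Finsupp.sub_apply, hm1app n, cSMul_apply,
        Finsupp.single_apply, if_neg (show ¬ N+1 = n by omega), mul_zero, sub_zero,
        if_pos (show N+1 ≤ n by omega)]
      by_cases hcase : n = N+1+r
      · subst hcase
        rw [show N+1+r - (N+1) = r from by omega, hcc]
        have hone : (⇑(twPS K s τK))^[N+1] uinv * (⇑(twPS K s τK))^[N+1] (Dθ r) = 1 := by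
          rw [← iter_map_mul, mul_comm uinv, huinv, iter_map_one]
        rw [mul_assoc, hone, mul_one, sub_self]
      · rw [hDθtop _ (show r < n - (N+1) by omega), iter_map_zero, mul_zero,
          hbd n (by omega), sub_zero]
    obtain ⟨c, hcT, mm', hmm'0, hmm'T, heq⟩ :=
      IH (h - (tmulPS K s (twPS K s τK) (Finsupp.single (N+1) cc) Dθ
          - cSMul K s (MvPowerSeries.C (σ := Fin s) (R := K) θ) (Finsupp.single (N+1) cc)))
        hh'0 hh'T hh'bd
    refine ⟨c, hcT, mm' + Finsupp.single (N+1) cc, ?_, ?_, ?_⟩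
    · rw [Finsupp.add_apply, hmm'0, Finsupp.single_apply,
        if_neg (show ¬ N+1 = 0 by omega), add_zero]
    · intro n
      rw [Finsupp.add_apply]
      exact isTate_add (hmm'T n) (hm1T n)
    · rw [tmul_add_left, cSMul_add]
      rw [sub_eq_iff_eq_add] at heq
      rw [heq]
      abel

lemma uniq_zero {r : ℕ} (hr : 0 < r)
    (τK : K →+* K) (θ : K)
    (Dθ : ℕ →₀ MvPowerSeries (Fin s) K)
    (hDθtop : ∀ n : ℕ, r < n → Dθ n = 0)
    (uinv : MvPowerSeries (Fin s) K)
    (huinv : Dθ r * uinv = 1)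
    (dval : Fin r → (ℕ →₀ MvPowerSeries (Fin s) K))
    (hdval : ∀ i : Fin r, dval i =
      if (i : ℕ) = 0 then Dθ - Finsupp.single 0 (MvPowerSeries.C (σ := Fin s) (R := K) θ)
      else Finsupp.single (i : ℕ) 1)
    (c : Fin r → MvPowerSeries (Fin s) K) (mm : ℕ →₀ MvPowerSeries (Fin s) K)
    (hmm0 : mm 0 = 0)
    (heq : (∑ i : Fin r, cSMul K s (c i) (dval i))
        + (tmulPS K s (twPS K s τK) mm Dθ
            - cSMul K s (MvPowerSeries.C (σ := Fin s) (R := K) θ) mm) = 0) :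
    ∀ i, c i = 0 := by
  have hDru : ∀ (k : ℕ) (x : MvPowerSeries (Fin s) K),
      x * (⇑(twPS K s τK))^[k] (Dθ r) = 0 → x = 0 := by
    intro k x hx
    have h1 : (⇑(twPS K s τK))^[k] (Dθ r) * (⇑(twPS K s τK))^[k] uinv = 1 := by
      rw [← iter_map_mul, huinv, iter_map_one]
    calc x = x * ((⇑(twPS K s τK))^[k] (Dθ r) * (⇑(twPS K s τK))^[k] uinv) := by
          rw [h1, mul_one]
    _ = (x * (⇑(twPS K s τK))^[k] (Dθ r)) * (⇑(twPS K s τK))^[k] uinv := by ring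
    _ = 0 := by rw [hx, zero_mul]
  have hmm : mm = 0 := by
    have key : ∀ d, (∀ i, d < i → mm i = 0) → mm = 0 := by
      intro d
      induction d with
      | zero =>
        intro hb
        refine Finsupp.ext fun i => ?_
        rcases Nat.eq_zero_or_pos i with hh | hh
        · rw [hh]
          simpa using hmm0
        · simpa using hb i hh
      | succ d IHd =>
        intro hb
        have hz : mm (d+1) = 0 := by
          have hco := congrArg (fun v : ℕ →₀ MvPowerSeries (Fin s) K => v (d+1+r)) heq
          rw [Finsupp.add_apply, Finsupp.sub_apply,
            sum_cdval_apply hr Dθ θ dval hdval, cSMul_apply, tmul_apply] at hco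
          rw [Finsupp.sub_apply, hDθtop _ (by omega), Finsupp.single_apply,
            if_neg (show ¬ (0:ℕ) = d+1+r by omega), sub_zero, mul_zero,
            dif_neg (show ¬ d+1+r < r by omega)] at hco
          simp only [Finsupp.coe_zero, Pi.zero_apply, zero_add, add_zero] at hco
          rw [hb _ (by omega), mul_zero, sub_zero] at hco
          rw [Finset.sum_eq_single (d+1) ?_ ?_] at hco
          · rw [show d+1+r-(d+1) = r from by omega] at hco
            apply hDru (d+1)
            simpa using hco
          · intro i hi hne
            rcases Nat.lt_or_ge i (d+1) with hlt | hge
            · rw [hDθtop _ (by omega), iter_map_zero, mul_zero]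
            · rw [hb i (by omega), zero_mul]
          · intro habs
            exact absurd (Finset.mem_range.mpr (by omega)) habs
        refine IHd fun i hi => ?_
        rcases Nat.lt_or_ge (d+1) i with h1 | h1
        · exact hb i h1
        · have hieq : i = d+1 := by omega
          rw [hieq]
          exact hz
    refine key (mm.support.sup id) fun i hi => ?_
    by_contra hne
    have hmem : i ∈ mm.support := Finsupp.mem_support_iff.mpr hne
    have := Finset.le_sup (f := id) hmem
    simp only [id] at this
    omega
  rw [hmm, tmul_zero_left, cSMul_zero, sub_zero, add_zero] at heq
  have hc0 : c ⟨0, hr⟩ = 0 := by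
    have hco := congrArg (fun v : ℕ →₀ MvPowerSeries (Fin s) K => v r) heq
    rw [sum_cdval_apply hr Dθ θ dval hdval, dif_neg (lt_irrefl r),
      add_zero, Finsupp.sub_apply, Finsupp.single_apply,
      if_neg (show ¬ (0:ℕ) = r by omega), sub_zero] at hco
    apply hDru 0
    simpa using hco
  intro i
  by_cases h0 : (i : ℕ) = 0
  · rw [show i = (⟨0, hr⟩ : Fin r) from Fin.ext h0]
    exact hc0
  · have hco := congrArg (fun v : ℕ →₀ MvPowerSeries (Fin s) K => v (i : ℕ)) heq
    rw [sum_cdval_apply hr Dθ θ dval hdval, dif_pos i.isLt, if_neg h0,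
      hc0, zero_mul, zero_add, Fin.eta] at hco
    simpa using hco

end Big


/-- for `A_r ∈ 𝕋_s^×`, the de Rham module
`H*_DR(φ) = Der(φ)/Der_si(φ)` is a free `𝕋_s`-module of rank `r` with basis the
classes of `δ^0, …, δ^{r-1}`, where `δ^0_θ = φ_θ - θ` and `δ^i_θ = τ^i` (`1 ≤ i < r`):
every biderivation `η` satisfies `η_θ ≡ Σ_i c_i δ^i_θ` modulo values of strictly inner
biderivations, with uniquely determined `c_i ∈ 𝕋_s`. -/
theorem stmt13
    (K : Type) [NontriviallyNormedField K] [IsUltrametricDist K] [CompleteSpace K]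
    (q : ℕ) (hq : IsPrimePow q)
    (τK : K ≃+* K) (hτK : ∀ x : K, τK x = x ^ q)
    (s : ℕ) (r : ℕ) (hr : 0 < r)
    (θ : K) (hθ : ‖θ‖ = q)
    (Dθ : ℕ →₀ MvPowerSeries (Fin s) K)
    (hDθ0 : Dθ 0 = MvPowerSeries.C (σ := Fin s) (R := K) θ)
    (hDθtop : ∀ n : ℕ, r < n → Dθ n = 0)
    (hDθT : ∀ n, IsTate K s (Dθ n))
    (uinv : MvPowerSeries (Fin s) K) (huinvT : IsTate K s uinv)
    (huinv : Dθ r * uinv = 1)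
    (φ : AtsSub K s q θ → (ℕ →₀ MvPowerSeries (Fin s) K))
    (hφ : IsDrinfeldHom K s q θ (twPS K s τK.toRingHom) Dθ φ)
    (θD : AtsSub K s q θ)
    (hθD : (θD : MvPowerSeries (Fin s) K) = MvPowerSeries.C (σ := Fin s) (R := K) θ)
    (dval : Fin r → (ℕ →₀ MvPowerSeries (Fin s) K))
    (hdval : ∀ i : Fin r, dval i =
      if (i : ℕ) = 0 then Dθ - Finsupp.single 0 (MvPowerSeries.C (σ := Fin s) (R := K) θ)
      else Finsupp.single (i : ℕ) 1)
    (η : AtsSub K s q θ → (ℕ →₀ MvPowerSeries (Fin s) K))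
    (hη : IsBider K s q θ (twPS K s τK.toRingHom) φ η) :
    ∃ c : Fin r → MvPowerSeries (Fin s) K,
      (∀ i, IsTate K s (c i)) ∧
      (∃ mm : ℕ →₀ MvPowerSeries (Fin s) K,
        mm 0 = 0 ∧ (∀ n, IsTate K s (mm n)) ∧
        η θD = (∑ i : Fin r, cSMul K s (c i) (dval i))
          + (tmulPS K s (twPS K s τK.toRingHom) mm Dθ
              - cSMul K s (MvPowerSeries.C (σ := Fin s) (R := K) θ) mm)) ∧
      (∀ (c' : Fin r → MvPowerSeries (Fin s) K)
        (mm' : ℕ →₀ MvPowerSeries (Fin s) K),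
        (∀ i, IsTate K s (c' i)) → mm' 0 = 0 → (∀ n, IsTate K s (mm' n)) →
        η θD = (∑ i : Fin r, cSMul K s (c' i) (dval i))
          + (tmulPS K s (twPS K s τK.toRingHom) mm' Dθ
              - cSMul K s (MvPowerSeries.C (σ := Fin s) (R := K) θ) mm') →
        c' = c) := by

  classical
  have hq0 : q ≠ 0 := hq.pos.ne'
  have hτ : ∀ x : K, ‖τK.toRingHom x‖ = ‖x‖ ^ q := by
    intro x
    rw [show τK.toRingHom x = τK x from rfl, hτK, norm_pow]
  have h0 : η θD 0 = 0 := hη.2.2.1 θD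
  have hT : ∀ n, IsTate K s (η θD n) := fun n => hη.2.2.2.1 θD n
  have hbd : ∀ n, (η θD).support.sup id + r < n → η θD n = 0 := by
    intro n hn
    by_contra hne
    have hmem : n ∈ (η θD).support := Finsupp.mem_support_iff.mpr hne
    have := Finset.le_sup (f := id) hmem
    simp only [id] at this
    omega
  obtain ⟨c, hcT, mm, hmm0, hmmT, heqn⟩ :=
    reduceLemma hq0 hr τK.toRingHom hτ θ Dθ hDθ0 hDθtop hDθT uinv huinvT huinv dval hdval
      ((η θD).support.sup id) (η θD) h0 hT hbd
  refine ⟨c, hcT, ⟨mm, hmm0, hmmT, heqn⟩, ?_⟩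
  intro c' mm' hc'T hmm'0 hmm'T heq'
  have hzero : (∑ i : Fin r, cSMul K s (c' i - c i) (dval i))
      + (tmulPS K s (twPS K s τK.toRingHom) (mm' - mm) Dθ
          - cSMul K s (MvPowerSeries.C (σ := Fin s) (R := K) θ) (mm' - mm)) = 0 := by
    have e1 : ∀ i : Fin r, cSMul K s (c' i - c i) (dval i)
        = cSMul K s (c' i) (dval i) - cSMul K s (c i) (dval i) :=
      fun i => cSMul_sub_left _ _ _
    simp only [e1, Finset.sum_sub_distrib, tmul_sub_left, cSMul_sub]
    have h2 : (∑ i : Fin r, cSMul K s (c' i) (dval i))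
        + (tmulPS K s (twPS K s τK.toRingHom) mm' Dθ
            - cSMul K s (MvPowerSeries.C (σ := Fin s) (R := K) θ) mm')
        = (∑ i : Fin r, cSMul K s (c i) (dval i))
        + (tmulPS K s (twPS K s τK.toRingHom) mm Dθ
            - cSMul K s (MvPowerSeries.C (σ := Fin s) (R := K) θ) mm) := by
      rw [← heq', ← heqn]
    calc (∑ i : Fin r, cSMul K s (c' i) (dval i)) - (∑ i : Fin r, cSMul K s (c i) (dval i))
          + ((tmulPS K s (twPS K s τK.toRingHom) mm' Dθ - tmulPS K s (twPS K s τK.toRingHom) mm Dθ)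
            - (cSMul K s (MvPowerSeries.C (σ := Fin s) (R := K) θ) mm'
                - cSMul K s (MvPowerSeries.C (σ := Fin s) (R := K) θ) mm))
        = ((∑ i : Fin r, cSMul K s (c' i) (dval i))
            + (tmulPS K s (twPS K s τK.toRingHom) mm' Dθ
                - cSMul K s (MvPowerSeries.C (σ := Fin s) (R := K) θ) mm'))
          - ((∑ i : Fin r, cSMul K s (c i) (dval i))
            + (tmulPS K s (twPS K s τK.toRingHom) mm Dθ
                - cSMul K s (MvPowerSeries.C (σ := Fin s) (R := K) θ) mm)) := by abel
    _ = 0 := by rw [h2, sub_self]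
  have hmmd0 : (mm' - mm) 0 = 0 := by
    rw [Finsupp.sub_apply, hmm'0, hmm0, sub_zero]
  have hci := uniq_zero hr τK.toRingHom θ Dθ hDθtop uinv huinv dval hdval
    (fun i => c' i - c i) (mm' - mm) hmmd0 hzero
  funext i
  exact sub_eq_zero.mp (hci i)
end
end
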